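/- arXiv:1505.03270 — 2 statements merged into one kernel-verified Lean document; each statement's English description precedes it below -/
import Mathlib

section
/- If G is a middle and right nuclear normal subgroup of a loop L, then for every x ∈ L the middle inner mapping T_x = ρ_x^{-1} ∘ λ_x maps G bijectively onto G and its restriction T_x|_G : G → G is an automorphism of the group G. -/
universe u v

/-- A loop: a type with a multiplication all of whose left and right translations
are bijective, together with a two-sided identity element. -/
class MLoop (L : Type u) extends Mul L, One L where
  mul_left_bij : ∀ x : L, Function.Bijective fun y : L => x * y
  mul_right_bij : ∀ x : L, Function.Bijective fun y : L => y * x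
  one_mul : ∀ x : L, 1 * x = x
  mul_one : ∀ x : L, x * 1 = x

instance (L : Type u) [MLoop L] : Nonempty L := ⟨1⟩

/-- Left division `x \ y = λ_x⁻¹ y`. -/
noncomputable def MLoop.ldiv {L : Type u} [MLoop L] (x y : L) : L :=
  Function.invFun (fun z : L => x * z) y

/-- Right division `x / y = ρ_y⁻¹ x`. -/
noncomputable def MLoop.rdiv {L : Type u} [MLoop L] (x y : L) : L :=
  Function.invFun (fun z : L => z * y) x

/-- Middle inner mapping `T_x = ρ_x⁻¹ ∘ λ_x`, i.e. `T_x t` is the unique `z` with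
`z * x = x * t`. -/
noncomputable def MLoop.midInner {L : Type u} [MLoop L] (x t : L) : L :=
  Function.invFun (fun z : L => z * x) (x * t)

/-- The left nucleus of a multiplicative structure. -/
def leftNucleus (L : Type u) [Mul L] : Set L :=
  {u : L | ∀ x y : L, u * x * y = u * (x * y)}

/-- The right nucleus of a multiplicative structure. -/
def rightNucleus (L : Type u) [Mul L] : Set L :=
  {u : L | ∀ x y : L, x * y * u = x * (y * u)}

/-- The middle nucleus of a multiplicative structure. -/
def middleNucleus (L : Type u) [Mul L] : Set L :=
  {u : L | ∀ x y : L, x * u * y = x * (u * y)}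

/-- A subset of a loop is a normal subloop if it is the kernel of a loop homomorphism. -/
def IsNormalSubloop {L : Type u} [MLoop L] (N : Set L) : Prop :=
  ∃ (M : Type u) (i : MLoop M) (f : L → M),
    (∀ x y : L, f (x * y) = i.toMul.mul (f x) (f y)) ∧ N = {x : L | f x = i.toOne.one}

/-- The data `(Θ, f)` of a Schreier extension of the group `G` by the loop `K`. -/
structure SchreierData (K : Type u) (G : Type v) [MLoop K] [Group G] where
  Θ : K → G ≃* G
  f : K → K → G
  theta_one : Θ 1 = MulEquiv.refl G
  f_one_left : ∀ σ : K, f 1 σ = 1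
  f_one_right : ∀ σ : K, f σ 1 = 1

/-- The multiplication of the Schreier loop `L(Θ,f)` on `K × G`:
`(τ,t)∘(σ,s) = (τσ, f(τ,σ)·Θ_σ(t)·s)`. -/
def SchreierData.mul {K : Type u} {G : Type v} [MLoop K] [Group G]
    (D : SchreierData K G) (p q : K × G) : K × G :=
  (p.1 * q.1, D.f p.1 q.1 * D.Θ q.1 p.2 * q.2)

private lemma mid_spec {L : Type u} [MLoop L] (x t : L) :
    MLoop.midInner x t * x = x * t :=
  Function.rightInverse_invFun (MLoop.mul_right_bij x).surjective (x * t)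

private lemma ldiv_spec {L : Type u} [MLoop L] (x y : L) :
    x * MLoop.ldiv x y = y :=
  Function.rightInverse_invFun (MLoop.mul_left_bij x).surjective y

/-- if `G` is a middle and right nuclear normal subgroup of a loop `L`,
then for every `x ∈ L` the middle inner mapping `T_x = ρ_x⁻¹ ∘ λ_x` maps `G` bijectively
onto `G` and its restriction to `G` is an automorphism of the group `G`. -/
theorem schreier_stmt10 {L : Type u} [MLoop L] (G : Set L) [Group G]
    (hGmul : ∀ a b : G, ((a * b : G) : L) = (a : L) * (b : L))
    (hGone : ((1 : G) : L) = 1)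
    (hnorm : IsNormalSubloop G)
    (hnuc : G ⊆ middleNucleus L ∩ rightNucleus L) :
    ∀ x : L,
      Set.BijOn (MLoop.midInner x) G G ∧
      ∀ s ∈ G, ∀ t ∈ G,
        MLoop.midInner x (s * t) = MLoop.midInner x s * MLoop.midInner x t := by
  obtain ⟨M, i, f, hf, hN⟩ := hnorm
  letI : MLoop M := i
  have hf' : ∀ x y : L, f (x * y) = f x * f y := hf
  have hmem : ∀ t : L, t ∈ G ↔ f t = (1 : M) := by
    intro t; rw [hN]; rfl
  intro x
  have hmaps : Set.MapsTo (MLoop.midInner x) G G := by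
    intro t ht
    rw [hmem] at ht ⊢
    apply (MLoop.mul_right_bij (f x)).injective
    show f (MLoop.midInner x t) * f x = (1 : M) * f x
    rw [← hf', mid_spec, hf', ht, MLoop.mul_one, MLoop.one_mul]
  constructor
  · refine ⟨hmaps, ?_, ?_⟩
    · intro a _ b _ hab
      apply (MLoop.mul_left_bij x).injective
      show x * a = x * b
      rw [← mid_spec x a, ← mid_spec x b]
      exact congrArg (· * x) hab
    · intro s hs
      refine ⟨MLoop.ldiv x (s * x), ?_, ?_⟩
      · rw [hmem] at hs ⊢
        apply (MLoop.mul_left_bij (f x)).injective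
        show f x * f (MLoop.ldiv x (s * x)) = f x * (1 : M)
        rw [← hf', ldiv_spec, hf', hs, MLoop.mul_one, MLoop.one_mul]
      · apply (MLoop.mul_right_bij x).injective
        show MLoop.midInner x (MLoop.ldiv x (s * x)) * x = s * x
        rw [mid_spec, ldiv_spec]
  · intro s hs t ht
    have htr : t ∈ rightNucleus L := (hnuc ht).2
    have hTtm : MLoop.midInner x t ∈ middleNucleus L := (hnuc (hmaps ht)).1
    apply (MLoop.mul_right_bij x).injective
    show MLoop.midInner x (s * t) * x = (MLoop.midInner x s * MLoop.midInner x t) * x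
    rw [mid_spec, hTtm (MLoop.midInner x s) x, mid_spec x t,
      ← htr (MLoop.midInner x s) x, mid_spec x s]
    exact (htr x s).symm
end

section
/- A loop L has a Schreier decomposition with respect to a normal subgroup G if and only if G is middle and right nuclear in L. -/
universe u v

section AuxLemmas
variable {A : Type u} [MLoop A]

theorem MLoop.mul_ldiv' (x y : A) : x * MLoop.ldiv x y = y :=
  Function.invFun_eq ((MLoop.mul_left_bij x).2 y)

theorem MLoop.rdiv_mul' (x y : A) : MLoop.rdiv x y * y = x :=
  Function.invFun_eq ((MLoop.mul_right_bij y).2 x)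

theorem MLoop.lcancel (x : A) {y z : A} (h : x * y = x * z) : y = z :=
  (MLoop.mul_left_bij x).1 h

theorem MLoop.rcancel (x : A) {y z : A} (h : y * x = z * x) : y = z :=
  (MLoop.mul_right_bij x).1 h

theorem MLoop.ldiv_eq' {x y z : A} (h : x * z = y) : MLoop.ldiv x y = z :=
  MLoop.lcancel x (by rw [MLoop.mul_ldiv', h])

theorem MLoop.rdiv_eq' {x y z : A} (h : z * y = x) : MLoop.rdiv x y = z :=
  MLoop.rcancel y (by rw [MLoop.rdiv_mul', h])

end AuxLemmas

namespace S12

variable {L : Type u} {M : Type u} [MLoop L] [MLoop M] (φ : L → M)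

def st : Setoid L := ⟨fun a b => φ a = φ b, ⟨fun _ => rfl, Eq.symm, Eq.trans⟩⟩

variable (hφ : ∀ x y : L, φ (x * y) = φ x * φ y)

def qmul : Quotient (st φ) → Quotient (st φ) → Quotient (st φ) :=
  Quotient.map₂ (· * ·) fun a b (hab : φ a = φ b) c d (hcd : φ c = φ d) =>
    show φ (a * c) = φ (b * d) by rw [hφ, hφ, hab, hcd]

theorem qmul_mk (a b : L) :
    qmul φ hφ (Quotient.mk (st φ) a) (Quotient.mk (st φ) b) = Quotient.mk (st φ) (a * b) := rfl

theorem qmul_left_bij (k : Quotient (st φ)) :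
    Function.Bijective fun y => qmul φ hφ k y := by
  obtain ⟨x⟩ := k
  constructor
  · intro a b h
    obtain ⟨a⟩ := a
    obtain ⟨b⟩ := b
    have h2 : φ (x * a) = φ (x * b) := Quotient.exact h
    rw [hφ, hφ] at h2
    exact Quotient.sound ((MLoop.mul_left_bij (φ x)).1 h2)
  · intro c
    obtain ⟨c⟩ := c
    exact ⟨Quotient.mk (st φ) (MLoop.ldiv x c),
      congrArg (Quotient.mk (st φ)) (MLoop.mul_ldiv' x c)⟩

theorem qmul_right_bij (k : Quotient (st φ)) :
    Function.Bijective fun y => qmul φ hφ y k := by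
  obtain ⟨x⟩ := k
  constructor
  · intro a b h
    obtain ⟨a⟩ := a
    obtain ⟨b⟩ := b
    have h2 : φ (a * x) = φ (b * x) := Quotient.exact h
    rw [hφ, hφ] at h2
    exact Quotient.sound ((MLoop.mul_right_bij (φ x)).1 h2)
  · intro c
    obtain ⟨c⟩ := c
    exact ⟨Quotient.mk (st φ) (MLoop.rdiv c x),
      congrArg (Quotient.mk (st φ)) (MLoop.rdiv_mul' c x)⟩

def qloop : MLoop (Quotient (st φ)) where
  mul := qmul φ hφ
  one := Quotient.mk (st φ) 1
  mul_left_bij := qmul_left_bij φ hφ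
  mul_right_bij := qmul_right_bij φ hφ
  one_mul := Quotient.ind fun x => congrArg (Quotient.mk (st φ)) (MLoop.one_mul x)
  mul_one := Quotient.ind fun x => congrArg (Quotient.mk (st φ)) (MLoop.mul_one x)

end S12

/-- a loop `L` has a Schreier decomposition with respect to a normal
subgroup `G` (an isomorphism `F : L(Θ,f) → L` from some Schreier loop on `K × G` with
`F(ε,t) = t` for all `t ∈ G`) if and only if `G` is middle and right nuclear in `L`. -/
theorem schreier_stmt12 {L : Type u} [MLoop L] (G : Set L) [Group G]
    (hGmul : ∀ a b : G, ((a * b : G) : L) = (a : L) * (b : L))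
    (hGone : ((1 : G) : L) = 1)
    (hnorm : IsNormalSubloop G) :
    (∃ (K : Type u) (iK : MLoop K) (D : @SchreierData K (↥G) iK _)
        (F : K × G → L),
      Function.Bijective F ∧ (∀ p q : K × G, F (D.mul p q) = F p * F q) ∧
      ∀ t : G, F (iK.toOne.one, t) = (t : L)) ↔
    G ⊆ middleNucleus L ∩ rightNucleus L := by
  classical
  constructor
  · -- Forward: a Schreier decomposition makes G middle and right nuclear.
    rintro ⟨K, iK, D, F, hFbij, hFhom, hFe⟩ u hu
    set uG : ↥G := ⟨u, hu⟩ with huG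
    have hcoe : (uG : L) = u := rfl
    set e : K := iK.toOne.one with he
    have he1 : e = (1 : K) := rfl
    have hmul1 : ∀ p : K × ↥G, D.mul p (e, uG) = (p.1, p.2 * uG) := by
      intro p
      show (p.1 * e, D.f p.1 e * D.Θ e p.2 * uG) = (p.1, p.2 * uG)
      rw [he1, D.f_one_right, D.theta_one, MLoop.mul_one]
      simp
    have h1mul : ∀ q : K × ↥G, D.mul (e, uG) q = (q.1, D.Θ q.1 uG * q.2) := by
      intro q
      show (e * q.1, D.f e q.1 * D.Θ q.1 uG * q.2) = (q.1, D.Θ q.1 uG * q.2)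
      rw [he1, D.f_one_left, MLoop.one_mul, one_mul]
    constructor
    · -- middle nucleus
      intro x y
      obtain ⟨p, rfl⟩ := hFbij.2 x
      obtain ⟨q, rfl⟩ := hFbij.2 y
      calc F p * u * F q
          = F (D.mul (D.mul p (e, uG)) q) := by
            rw [← hcoe, ← hFe uG, ← hFhom, ← hFhom]
        _ = F (D.mul p (D.mul (e, uG) q)) := by
            rw [hmul1, h1mul]
            show F (p.1 * q.1, D.f p.1 q.1 * D.Θ q.1 (p.2 * uG) * q.2) =
              F (p.1 * q.1, D.f p.1 q.1 * D.Θ q.1 p.2 * (D.Θ q.1 uG * q.2))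
            rw [map_mul, mul_assoc, mul_assoc, mul_assoc]
        _ = F p * (u * F q) := by
            rw [hFhom, hFhom, hFe uG, hcoe]
    · -- right nucleus
      intro x y
      obtain ⟨p, rfl⟩ := hFbij.2 x
      obtain ⟨q, rfl⟩ := hFbij.2 y
      calc F p * F q * u
          = F (D.mul (D.mul p q) (e, uG)) := by
            rw [← hcoe, ← hFe uG, ← hFhom, ← hFhom]
        _ = F (D.mul p (D.mul q (e, uG))) := by
            rw [hmul1, hmul1]
            show F (p.1 * q.1, D.f p.1 q.1 * D.Θ q.1 p.2 * q.2 * uG) =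
              F (p.1 * q.1, D.f p.1 q.1 * D.Θ q.1 p.2 * (q.2 * uG))
            rw [mul_assoc]
        _ = F p * (F q * u) := by
            rw [hFhom, hFhom, hFe uG, hcoe]
  · -- Backward: nuclearity gives a Schreier decomposition.
    intro hsub
    obtain ⟨M, iM, φ, hφ0, hker⟩ := hnorm
    have hφ : ∀ x y : L, φ (x * y) = φ x * φ y := hφ0
    have hG : ∀ x : L, x ∈ G ↔ φ x = 1 := by
      intro x; rw [hker]; exact Iff.rfl
    have hmid : ∀ u, u ∈ G → ∀ x y : L, x * u * y = x * (u * y) := fun u hu => (hsub hu).1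
    have hrt : ∀ u, u ∈ G → ∀ x y : L, x * y * u = x * (y * u) := fun u hu => (hsub hu).2
    -- the quotient loop
    let K := Quotient (S12.st φ)
    letI iK : MLoop K := S12.qloop φ hφ
    have hmk : ∀ a b : L,
        Quotient.mk (S12.st φ) a * Quotient.mk (S12.st φ) b = Quotient.mk (S12.st φ) (a * b) :=
      fun a b => rfl
    have hone : (1 : K) = Quotient.mk (S12.st φ) 1 := rfl
    -- membership criteria
    have hGl : ∀ a b : L, φ a = φ b → MLoop.ldiv a b ∈ G := by
      intro a b h
      rw [hG]
      refine MLoop.lcancel (φ a) ?_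
      rw [← hφ, MLoop.mul_ldiv', MLoop.mul_one]
      exact h.symm
    have hGr : ∀ a b : L, φ a = φ b → MLoop.rdiv a b ∈ G := by
      intro a b h
      rw [hG]
      refine MLoop.rcancel (φ b) ?_
      rw [← hφ, MLoop.rdiv_mul', MLoop.one_mul]
      exact h
    -- a section of the quotient map
    obtain ⟨s, hs, hs1⟩ : ∃ s : K → L,
        (∀ k : K, Quotient.mk (S12.st φ) (s k) = k) ∧ s (Quotient.mk (S12.st φ) 1) = 1 := by
      refine ⟨fun k => if k = Quotient.mk (S12.st φ) 1 then 1 else Quotient.out k,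
        fun k => ?_, by simp⟩
      show Quotient.mk (S12.st φ)
        (if k = Quotient.mk (S12.st φ) 1 then 1 else Quotient.out k) = k
      by_cases h : k = Quotient.mk (S12.st φ) 1
      · rw [if_pos h, h]
      · rw [if_neg h, Quotient.out_eq]
    -- the maps θ, θinv, f
    obtain ⟨θ, hθ⟩ : ∃ θ : K → ↥G → ↥G, ∀ (k : K) (t : ↥G),
        s k * ((θ k t : ↥G) : L) = (t : L) * s k := by
      refine ⟨fun k t => ⟨MLoop.ldiv (s k) ((t : L) * s k), hGl _ _ ?_⟩,
        fun k t => MLoop.mul_ldiv' _ _⟩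
      rw [hφ, (hG _).1 t.2, MLoop.one_mul]
    obtain ⟨θinv, hθinv⟩ : ∃ ti : K → ↥G → ↥G, ∀ (k : K) (t : ↥G),
        ((ti k t : ↥G) : L) * s k = s k * (t : L) := by
      refine ⟨fun k t => ⟨MLoop.rdiv (s k * (t : L)) (s k), hGr _ _ ?_⟩,
        fun k t => MLoop.rdiv_mul' _ _⟩
      rw [hφ, (hG _).1 t.2, MLoop.mul_one]
    have hcl : ∀ k k' : K, φ (s (k * k')) = φ (s k * s k') := by
      intro k k'
      have h1 : Quotient.mk (S12.st φ) (s k * s k') = k * k' := by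
        rw [← hmk, hs, hs]
      exact Quotient.exact ((hs (k * k')).trans h1.symm)
    obtain ⟨ff, hff⟩ : ∃ ff : K → K → ↥G, ∀ k k' : K,
        s (k * k') * ((ff k k' : ↥G) : L) = s k * s k' :=
      ⟨fun k k' => ⟨MLoop.ldiv (s (k * k')) (s k * s k'), hGl _ _ (hcl k k')⟩,
       fun k k' => MLoop.mul_ldiv' _ _⟩
    -- θ k is a group automorphism of G
    have hθmul : ∀ (k : K) (t t' : ↥G), θ k (t * t') = θ k t * θ k t' := by
      intro k t t'
      refine (Subtype.ext (MLoop.lcancel (s k) ?_)).symm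
      calc s k * ((θ k t * θ k t' : ↥G) : L)
          = s k * ((θ k t : L) * (θ k t' : L)) := by rw [hGmul]
        _ = s k * (θ k t : L) * (θ k t' : L) := (hmid _ (θ k t).2 _ _).symm
        _ = (t : L) * s k * (θ k t' : L) := by rw [hθ]
        _ = (t : L) * (s k * (θ k t' : L)) := hrt _ (θ k t').2 _ _
        _ = (t : L) * ((t' : L) * s k) := by rw [hθ]
        _ = (t : L) * (t' : L) * s k := (hmid _ t'.2 _ _).symm
        _ = ((t * t' : ↥G) : L) * s k := by rw [hGmul]
        _ = s k * ((θ k (t * t') : ↥G) : L) := (hθ _ _).symm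
    have hli : ∀ (k : K) (t : ↥G), θinv k (θ k t) = t := by
      intro k t
      refine Subtype.ext (MLoop.rcancel (s k) ?_)
      rw [hθinv, hθ]
    have hri : ∀ (k : K) (t : ↥G), θ k (θinv k t) = t := by
      intro k t
      refine Subtype.ext (MLoop.lcancel (s k) ?_)
      rw [hθ, hθinv]
    refine ⟨K, iK,
      ⟨fun k => ⟨⟨θ k, θinv k, hli k, hri k⟩, hθmul k⟩, ff, ?_, ?_, ?_⟩,
      fun p => s p.1 * ((p.2 : ↥G) : L), ⟨?_, ?_⟩, ?_, ?_⟩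
    · -- theta_one
      refine MulEquiv.ext fun t => Subtype.ext ?_
      show ((θ 1 t : ↥G) : L) = (t : L)
      refine MLoop.lcancel (s (1 : K)) ?_
      rw [hθ, hone, hs1, MLoop.mul_one, MLoop.one_mul]
    · -- f_one_left
      intro σ
      refine Subtype.ext ?_
      refine MLoop.lcancel (s ((1 : K) * σ)) ?_
      rw [hff, hGone, MLoop.mul_one (s ((1 : K) * σ)), MLoop.one_mul σ, hone, hs1,
        MLoop.one_mul (s σ)]
    · -- f_one_right
      intro σ
      refine Subtype.ext ?_
      refine MLoop.lcancel (s (σ * (1 : K))) ?_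
      rw [hff, hGone, MLoop.mul_one (s (σ * (1 : K))), MLoop.mul_one σ, hone, hs1,
        MLoop.mul_one (s σ)]
    · -- injective
      rintro ⟨k, t⟩ ⟨k', t'⟩ h
      have h' : s k * (t : L) = s k' * (t' : L) := h
      have hk : k = k' := by
        have h2 : φ (s k * (t : L)) = φ (s k' * (t' : L)) := congrArg φ h'
        rw [hφ, hφ, (hG _).1 t.2, (hG _).1 t'.2, MLoop.mul_one, MLoop.mul_one] at h2
        rw [← hs k, ← hs k']
        exact Quotient.sound h2
      subst hk
      have ht : (t : L) = (t' : L) := MLoop.lcancel (s k) h'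
      exact Prod.ext rfl (Subtype.ext ht)
    · -- surjective
      intro x
      exact ⟨(Quotient.mk (S12.st φ) x,
        ⟨MLoop.ldiv (s (Quotient.mk (S12.st φ) x)) x, hGl _ _ (Quotient.exact (hs _))⟩),
        MLoop.mul_ldiv' _ _⟩
    · -- homomorphism
      rintro ⟨k, t⟩ ⟨k', t'⟩
      show s (k * k') * ((ff k k' * θ k' t * t' : ↥G) : L) = (s k * (t : L)) * (s k' * (t' : L))
      rw [hGmul, hGmul]
      calc s (k * k') * ((ff k k' : L) * (θ k' t : L) * (t' : L))
          = s (k * k') * ((ff k k' : L) * (θ k' t : L)) * (t' : L) :=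
            (hrt _ t'.2 _ _).symm
        _ = s (k * k') * (ff k k' : L) * (θ k' t : L) * (t' : L) := by
            rw [← hmid _ (ff k k').2 (s (k * k')) ((θ k' t : ↥G) : L)]
        _ = s k * s k' * (θ k' t : L) * (t' : L) := by rw [hff]
        _ = s k * (s k' * (θ k' t : L)) * (t' : L) := by
            rw [hrt _ (θ k' t).2 (s k) (s k')]
        _ = s k * ((t : L) * s k') * (t' : L) := by rw [hθ]
        _ = s k * (t : L) * s k' * (t' : L) := by
            rw [← hmid _ t.2 (s k) (s k')]
        _ = (s k * (t : L)) * (s k' * (t' : L)) := hrt _ t'.2 _ _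
    · -- identity
      intro t
      show s iK.toOne.one * (t : L) = (t : L)
      rw [show iK.toOne.one = Quotient.mk (S12.st φ) 1 from rfl, hs1, MLoop.one_mul]
end
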